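/- Let M = (M_k)_{k≥0} belong to the class 𝓜. Define w(r) = sup_{k∈ℤ, k≥0} ln(r^k/M_k) for r > 0 and w(0) = 0; define h(s) = liminf_{k→∞}(1/(sk))·ln(M_k^s/M_{⌊sk⌋+1}) for s > 0, and l(s) = exp(h(s)). Then for every s > 0 and every δ ∈ (0,1) there exists a constant Q(s,δ) ≥ 0 such that s·w(r) ≤ w(r/(l(s)·(1−δ))) + Q(s,δ) for all r ≥ 0. -/

import Mathlib

open Filter

/-- Condition (i1): logarithmic convexity. -/
def CondI1 (L : ℕ → ℝ) : Prop := ∀ n : ℕ, (L (n + 1)) ^ 2 ≤ L n * L (n + 2)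

/-- Condition (i2). -/
def CondI2 (L : ℕ → ℝ) : Prop :=
  ∃ H₁ : ℝ, 0 < H₁ ∧ ∃ H₂ : ℝ, 0 < H₂ ∧ ∀ n : ℕ, H₁ * H₂ ^ n * n.factorial ≤ L n

/-- Condition (i3). -/
def CondI3 (L : ℕ → ℝ) : Prop :=
  ∀ s : ℝ, 1 < s →
    1 < Filter.liminf (fun n : ℕ => (L ⌊s * (n : ℝ)⌋₊ / (L n) ^ s) ^ ((1 : ℝ) / n)) Filter.atTop

/-- Condition (i4). -/
def CondI4 (L : ℕ → ℝ) : Prop :=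
  ∀ δ : ℝ, 0 < δ → ∃ p : ℝ, 0 < p ∧ ∃ t : ℝ, 1 < t ∧
    ∀ n m : ℕ, L (m + n) / (L m * (1 + δ) ^ m) ≤ p * t ^ n * L n

/-- The class 𝓜 of increasing sequences of positive reals with first term 1
satisfying (i1)-(i4). -/
def ClassM (L : ℕ → ℝ) : Prop :=
  (∀ n, 0 < L n) ∧ Monotone L ∧ L 0 = 1 ∧ CondI1 L ∧ CondI2 L ∧ CondI3 L ∧ CondI4 L

private lemma aux_A (g : ℕ → ℝ) (hg0 : g 0 = 0)
    (hd : ∀ n, g (n+1) - g n ≤ g (n+2) - g (n+1)) :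
    ∀ j : ℕ, g (j+1) ≤ ((j:ℝ)+1) * (g (j+1) - g j) := by
  intro j
  induction j with
  | zero => simp [hg0]
  | succ j ih =>
    have h1 := hd j
    have hj : (0:ℝ) ≤ (j:ℝ)+1 := by positivity
    have h2 := mul_le_mul_of_nonneg_left h1 hj
    push_cast
    nlinarith

private lemma aux_L1 (g : ℕ → ℝ) (hg0 : g 0 = 0)
    (hd : ∀ n, g (n+1) - g n ≤ g (n+2) - g (n+1)) :
    ∀ j m : ℕ, j ≤ m → (m:ℝ) * g j ≤ (j:ℝ) * g m := by
  have hdm : Monotone (fun n => g (n+1) - g n) := monotone_nat_of_le_succ (fun n => hd n)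
  have hA := aux_A g hg0 hd
  intro j m hjm
  induction m, hjm using Nat.le_induction with
  | base => exact le_refl _
  | succ m hjm ih =>
    have key : g j ≤ (j:ℝ) * (g (m+1) - g m) := by
      rcases Nat.eq_zero_or_pos j with h | h
      · simp [h, hg0]
      · obtain ⟨j', rfl⟩ := Nat.exists_eq_succ_of_ne_zero h.ne'
        have h1 := hA j'
        have h2 : g (j'+1) - g j' ≤ g (m+1) - g m := hdm (by omega)
        have h3 : (0:ℝ) ≤ (j':ℝ)+1 := by positivity
        have h4 := mul_le_mul_of_nonneg_left h2 h3
        push_cast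
        nlinarith
    have e1 : ((m:ℝ)+1) * g j = (m:ℝ) * g j + g j := by ring
    have e2 : (j:ℝ) * g (m+1) = (j:ℝ) * g m + (j:ℝ) * (g (m+1) - g m) := by ring
    push_cast
    nlinarith

private lemma aux_L3 (g : ℕ → ℝ) (P T L : ℝ) (hg0 : g 0 = 0)
    (hL : 0 ≤ L)
    (hL2 : ∀ n m : ℕ, g (m+n) ≤ P + n*T + g n + g m + m*L) :
    ∀ i k : ℕ, g (i*k) ≤ (i:ℝ) * (g k + |P| + k*T + i*k*L) := by
  intro i k
  induction i with
  | zero => simp [hg0]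
  | succ i ih =>
    have h2 := hL2 k (i*k)
    have e : (i+1)*k = i*k + k := by ring
    rw [e]
    have hPa : P ≤ |P| := le_abs_self P
    have h0 : (0:ℝ) ≤ (i:ℝ) := by positivity
    have hk0 : (0:ℝ) ≤ (k:ℝ) := by positivity
    push_cast
    push_cast at ih h2
    nlinarith [mul_nonneg (mul_nonneg h0 hk0) hL, mul_nonneg hk0 hL, abs_nonneg P]

private lemma aux_bdd (M : ℕ → ℝ) (hpos : ∀ n, 0 < M n) (hi2 : CondI2 M)
    (r : ℝ) (hr : 0 < r) :
    BddAbove (Set.range fun k : ℕ => Real.log (r ^ k / M k)) := by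
  obtain ⟨H₁, h1, H₂, h2, hfac⟩ := hi2
  refine ⟨Real.log (Real.exp (r/H₂) / H₁), ?_⟩
  rintro x ⟨k, rfl⟩
  have step1 : r ^ k / M k ≤ r ^ k / (H₁ * H₂ ^ k * k.factorial) := by
    gcongr
    exact hfac k
  have step2 : r ^ k / (H₁ * H₂ ^ k * k.factorial) = ((r/H₂) ^ k / k.factorial) / H₁ := by
    field_simp
    rw [← mul_pow]
    congr 1
    field_simp
  have step3 : (r/H₂) ^ k / k.factorial ≤ Real.exp (r/H₂) := by
    have hx : (0:ℝ) ≤ r / H₂ := by positivity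
    calc (r/H₂)^k / (k.factorial : ℝ)
        ≤ ∑ i ∈ Finset.range (k+1), (r/H₂)^i / (i.factorial : ℝ) :=
          Finset.single_le_sum (f := fun i => (r/H₂)^i / (i.factorial : ℝ))
            (fun i _ => by positivity) (Finset.self_mem_range_succ k)
      _ ≤ Real.exp (r/H₂) := Real.sum_le_exp_of_nonneg hx _
  have final : r ^ k / M k ≤ Real.exp (r/H₂) / H₁ := by
    rw [step2] at step1
    exact step1.trans (by gcongr)
  exact Real.log_le_log (div_pos (pow_pos hr k) (hpos k)) final

set_option maxHeartbeats 2000000 in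
theorem stmt_19 (M : ℕ → ℝ) (hM : ClassM M) (w : ℝ → ℝ)
    (hw : ∀ r : ℝ, 0 < r → w r = ⨆ k : ℕ, Real.log (r ^ k / M k))
    (hw0 : w 0 = 0) (s δ : ℝ) (hs : 0 < s) (hδ : δ ∈ Set.Ioo (0 : ℝ) 1) :
    ∃ Q : ℝ, 0 ≤ Q ∧ ∀ r : ℝ, 0 ≤ r →
      s * w r ≤
        w (r / (Real.exp (Filter.liminf
          (fun k : ℕ => 1 / (s * k) *
            Real.log ((M k) ^ s / M (⌊s * (k : ℝ)⌋₊ + 1))) Filter.atTop) * (1 - δ))) + Q := by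
  obtain ⟨hpos, hmono, h0, hi1, hi2, hi3, hi4⟩ := hM
  obtain ⟨hδ0, hδ1⟩ := hδ
  set g : ℕ → ℝ := fun n => Real.log (M n) with hgdef
  have hg0 : g 0 = 0 := by simp [hgdef, h0]
  have hM1 : ∀ n, 1 ≤ M n := fun n => h0 ▸ hmono (Nat.zero_le n)
  have hgnn : ∀ n, 0 ≤ g n := fun n => Real.log_nonneg (hM1 n)
  have hd : ∀ n, g (n+1) - g n ≤ g (n+2) - g (n+1) := by
    intro n
    have h := hi1 n
    have h2 : Real.log ((M (n+1))^2) ≤ Real.log (M n * M (n+2)) :=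
      Real.log_le_log (pow_pos (hpos _) 2) h
    rw [Real.log_pow, Real.log_mul (hpos n).ne' (hpos (n+2)).ne'] at h2
    simp only [hgdef]
    push_cast at h2
    linarith
  have hL1 := aux_L1 g hg0 hd
  -- data from (i4) with δ = 1
  obtain ⟨p, hp, t, ht, h4⟩ := hi4 1 one_pos
  set P : ℝ := Real.log p with hPdef
  set T : ℝ := Real.log t with hTdef
  set L : ℝ := Real.log 2 with hLdef
  have hT0 : 0 < T := Real.log_pos ht
  have hL0 : 0 < L := Real.log_pos (by norm_num)
  have hL2 : ∀ n m : ℕ, g (m+n) ≤ P + n*T + g n + g m + m*L := by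
    intro n m
    have h := h4 n m
    have h2m : (0:ℝ) < M m * (1+1)^m := by
      have := hpos m; positivity
    rw [div_le_iff₀ h2m] at h
    have hmul : M (m+n) ≤ p * t^n * M n * (M m * 2^m) := by
      have e : M m * ((1:ℝ)+1)^m = M m * 2^m := by norm_num
      rw [e] at h; exact h
    have hlog := Real.log_le_log (hpos (m+n)) hmul
    have htn : t^n ≠ 0 := by positivity
    have h2n : ((2:ℝ))^m ≠ 0 := by positivity
    rw [Real.log_mul (mul_ne_zero (mul_ne_zero hp.ne' htn) (hpos n).ne')
          (mul_ne_zero (hpos m).ne' h2n),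
        Real.log_mul (mul_ne_zero hp.ne' htn) (hpos n).ne',
        Real.log_mul hp.ne' htn, Real.log_mul (hpos m).ne' h2n,
        Real.log_pow, Real.log_pow] at hlog
    simp only [hgdef]
    push_cast at hlog ⊢
    linarith
  -- constants
  obtain ⟨a, hadef⟩ : ∃ a : ℕ, a = ⌊s⌋₊ + 1 := ⟨_, rfl⟩
  obtain ⟨c, hcdef⟩ : ∃ c : ℕ, c = ⌈1/s⌉₊ := ⟨_, rfl⟩
  have hsa : s < (a:ℝ) := by
    rw [hadef]
    push_cast
    exact Nat.lt_floor_add_one s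
  have hcge1 : 1 ≤ c := by
    rw [hcdef]
    exact Nat.one_le_ceil_iff.2 (by positivity)
  have hage1 : 1 ≤ a := by omega
  have hc1 : (1:ℝ) ≤ s * c := by
    have h1 : 1/s ≤ (c:ℝ) := by
      rw [hcdef]; exact Nat.le_ceil (1/s)
    have h2 : s * (1/s) ≤ s * c := mul_le_mul_of_nonneg_left h1 hs.le
    have h3 : s * (1/s) = 1 := by field_simp
    linarith
  obtain ⟨R, hRdef⟩ : ∃ R : ℝ,
      R = 2*|P| + (c:ℝ)*T + g c + L + (1+(c:ℝ))*T + (a:ℝ)*(1+(c:ℝ))*L := ⟨_, rfl⟩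
  -- key upper bound on g at ⌊s k⌋ + 1
  have hgj : ∀ k : ℕ, 1 ≤ k → g (⌊s*(k:ℝ)⌋₊ + 1) ≤ s * (g k + R * k) := by
    intro k hk
    obtain ⟨j, hjdef⟩ : ∃ j : ℕ, j = ⌊s*(k:ℝ)⌋₊ + 1 := ⟨_, rfl⟩
    rw [← hjdef]
    have hk1 : (1:ℝ) ≤ (k:ℝ) := by exact_mod_cast hk
    have hjle : (j:ℝ) ≤ s*k + 1 := by
      have := Nat.floor_le (show (0:ℝ) ≤ s*(k:ℝ) by positivity)
      rw [hjdef]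
      push_cast
      linarith
    have ha1 : (1:ℝ) ≤ (a:ℝ) := by exact_mod_cast hage1
    have hc1' : (1:ℝ) ≤ (c:ℝ) := by exact_mod_cast hcge1
    have hjm : j ≤ a*(k+c) := by
      have h1 : (j:ℝ) ≤ (a:ℝ)*((k:ℝ)+(c:ℝ)) := by
        have e1 : s*(k:ℝ) ≤ (a:ℝ)*(k:ℝ) := mul_le_mul_of_nonneg_right hsa.le (by positivity)
        have e2 : (1:ℝ)*(1:ℝ) ≤ (a:ℝ)*(c:ℝ) := mul_le_mul ha1 hc1' (by norm_num) (by linarith)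
        have e3 : (a:ℝ)*((k:ℝ)+(c:ℝ)) = (a:ℝ)*(k:ℝ) + (a:ℝ)*(c:ℝ) := by ring
        rw [e3]
        norm_num at e2
        linarith
      exact_mod_cast h1
    have h1 := hL1 j (a*(k+c)) hjm
    have h3 := aux_L3 g P T L hg0 hL0.le hL2 a (k+c)
    obtain ⟨X, hXdef⟩ : ∃ X : ℝ,
        X = g (k+c) + |P| + ((k+c:ℕ):ℝ)*T + (a:ℝ)*((k+c:ℕ):ℝ)*L := ⟨_, rfl⟩
    rw [← hXdef] at h3
    have hkc1 : (1:ℝ) ≤ ((k+c:ℕ):ℝ) := by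
      push_cast
      linarith
    have hXnn : 0 ≤ X := by
      have n1 := hgnn (k+c)
      have n2 := abs_nonneg P
      have n3 : (0:ℝ) ≤ ((k+c:ℕ):ℝ)*T := by positivity
      have n4 : (0:ℝ) ≤ (a:ℝ)*((k+c:ℕ):ℝ)*L := by positivity
      rw [hXdef]
      linarith
    have hA0 : (0:ℝ) < (a:ℝ) := by linarith
    have step : ((k+c:ℕ):ℝ) * g j ≤ (j:ℝ) * X := by
      have h6 : (j:ℝ) * g (a*(k+c)) ≤ (j:ℝ) * ((a:ℝ) * X) :=
        mul_le_mul_of_nonneg_left h3 (Nat.cast_nonneg j)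
      have h5 : (a:ℝ) * (((k+c:ℕ):ℝ) * g j) ≤ (a:ℝ) * ((j:ℝ) * X) := by
        calc (a:ℝ) * (((k+c:ℕ):ℝ) * g j) = ((a*(k+c) : ℕ):ℝ) * g j := by push_cast; ring
          _ ≤ (j:ℝ) * g (a*(k+c)) := h1
          _ ≤ (j:ℝ) * ((a:ℝ) * X) := h6
          _ = (a:ℝ) * ((j:ℝ) * X) := by ring
      exact le_of_mul_le_mul_left h5 hA0
    have hjs : (j:ℝ) ≤ s * ((k+c:ℕ):ℝ) := by
      have e : s * ((k+c:ℕ):ℝ) = s*(k:ℝ) + s*(c:ℝ) := by push_cast; ring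
      rw [e]
      linarith
    have hgjX : g j ≤ s * X := by
      have h7 : (j:ℝ) * X ≤ (s * ((k+c:ℕ):ℝ)) * X := mul_le_mul_of_nonneg_right hjs hXnn
      have h8 : ((k+c:ℕ):ℝ) * g j ≤ ((k+c:ℕ):ℝ) * (s * X) := by
        calc ((k+c:ℕ):ℝ) * g j ≤ (j:ℝ) * X := step
          _ ≤ (s * ((k+c:ℕ):ℝ)) * X := h7
          _ = ((k+c:ℕ):ℝ) * (s * X) := by ring
      exact le_of_mul_le_mul_left h8 (by linarith)
    have hXle : X ≤ g k + R * k := by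
      have hkc := hL2 c k
      have e1 : P ≤ |P| * (k:ℝ) := (le_abs_self P).trans (le_mul_of_one_le_right (abs_nonneg P) hk1)
      have e2 : (c:ℝ)*T ≤ (c:ℝ)*T*(k:ℝ) := le_mul_of_one_le_right (by positivity) hk1
      have e3 : g c ≤ g c * (k:ℝ) := le_mul_of_one_le_right (hgnn c) hk1
      have e4 : |P| ≤ |P| * (k:ℝ) := le_mul_of_one_le_right (abs_nonneg P) hk1
      have hkcle : ((k+c:ℕ):ℝ) ≤ (1+(c:ℝ))*(k:ℝ) := by
        have e : ((k+c:ℕ):ℝ) = (k:ℝ) + (c:ℝ) := by push_cast; ring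
        have e2 : (c:ℝ)*1 ≤ (c:ℝ)*(k:ℝ) := mul_le_mul_of_nonneg_left hk1 (by linarith)
        rw [e]
        nlinarith
      have e5 : ((k+c:ℕ):ℝ)*T ≤ ((1+(c:ℝ))*T)*(k:ℝ) := by
        calc ((k+c:ℕ):ℝ)*T ≤ ((1+(c:ℝ))*(k:ℝ))*T := mul_le_mul_of_nonneg_right hkcle hT0.le
          _ = ((1+(c:ℝ))*T)*(k:ℝ) := by ring
      have e6 : (a:ℝ)*((k+c:ℕ):ℝ)*L ≤ ((a:ℝ)*(1+(c:ℝ))*L)*(k:ℝ) := by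
        have h9 : (a:ℝ)*((k+c:ℕ):ℝ) ≤ (a:ℝ)*((1+(c:ℝ))*(k:ℝ)) :=
          mul_le_mul_of_nonneg_left hkcle (by linarith)
        calc (a:ℝ)*((k+c:ℕ):ℝ)*L ≤ ((a:ℝ)*((1+(c:ℝ))*(k:ℝ)))*L :=
              mul_le_mul_of_nonneg_right h9 hL0.le
          _ = ((a:ℝ)*(1+(c:ℝ))*L)*(k:ℝ) := by ring
      rw [hXdef, hRdef]
      push_cast at hkc
      linarith
    calc g j ≤ s * X := hgjX
      _ ≤ s * (g k + R * k) := mul_le_mul_of_nonneg_left hXle hs.le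
  -- lower bound on the liminf sequence
  have hEbd : ∀ k : ℕ, 1 ≤ k →
      -R ≤ 1/(s*(k:ℝ)) * Real.log ((M k)^s / M (⌊s*(k:ℝ)⌋₊ + 1)) := by
    intro k hk
    have hk0 : (0:ℝ) < (k:ℝ) := by exact_mod_cast hk
    have hsk : (0:ℝ) < s*(k:ℝ) := mul_pos hs hk0
    have hlogeq : Real.log ((M k)^s / M (⌊s*(k:ℝ)⌋₊ + 1))
        = s * g k - g (⌊s*(k:ℝ)⌋₊ + 1) := by
      rw [Real.log_div (Real.rpow_pos_of_pos (hpos k) s).ne' (hpos _).ne',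
          Real.log_rpow (hpos k)]
    rw [hlogeq]
    have h1 := hgj k hk
    have h2 : -(s*(R*(k:ℝ))) ≤ s * g k - g (⌊s*(k:ℝ)⌋₊ + 1) := by nlinarith
    calc -R = 1/(s*(k:ℝ)) * (-(s*(R*(k:ℝ)))) := by field_simp
      _ ≤ 1/(s*(k:ℝ)) * (s * g k - g (⌊s*(k:ℝ)⌋₊ + 1)) :=
          mul_le_mul_of_nonneg_left h2 (by positivity)
  set lh : ℝ := Filter.liminf
      (fun k : ℕ => 1 / (s * (k:ℝ)) *
        Real.log ((M k) ^ s / M (⌊s * (k : ℝ)⌋₊ + 1))) Filter.atTop with hlhdef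
  set ε : ℝ := -Real.log (1-δ) with hεdef
  have hε0 : 0 < ε := by
    have : Real.log (1-δ) < 0 := Real.log_neg (by linarith) (by linarith)
    simp only [hεdef]
    linarith
  have hevbd : ∀ᶠ (k : ℕ) in (atTop : Filter ℕ),
      -R ≤ 1 / (s * (k:ℝ)) * Real.log ((M k) ^ s / M (⌊s * (k : ℝ)⌋₊ + 1)) := by
    filter_upwards [eventually_ge_atTop 1] with k hk using hEbd k hk
  have hbound : IsBoundedUnder (· ≥ ·) (atTop : Filter ℕ)
      (fun k : ℕ => 1 / (s * (k:ℝ)) * Real.log ((M k) ^ s / M (⌊s * (k : ℝ)⌋₊ + 1))) :=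
    isBoundedUnder_of_eventually_ge hevbd
  have hev : ∀ᶠ (k : ℕ) in (atTop : Filter ℕ),
      lh - ε < 1 / (s * (k:ℝ)) * Real.log ((M k) ^ s / M (⌊s * (k : ℝ)⌋₊ + 1)) :=
    eventually_lt_of_lt_liminf (by linarith) hbound
  obtain ⟨N₀, hN₀⟩ := eventually_atTop.1 hev
  set N : ℕ := max N₀ 1 with hNdef
  -- facts about w
  have hwle : ∀ r0 : ℝ, 0 < r0 → ∀ m : ℕ, Real.log (r0^m / M m) ≤ w r0 := by
    intro r0 hr0 m
    rw [hw r0 hr0]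
    exact le_ciSup (aux_bdd M hpos hi2 r0 hr0) m
  have hwnn : ∀ r0 : ℝ, 0 ≤ r0 → 0 ≤ w r0 := by
    intro r0 hr0
    rcases hr0.eq_or_lt with h | h
    · rw [← h, hw0]
    · have := hwle r0 h 0
      simpa [h0] using this
  set m₁ : ℕ := ⌈s*(N:ℝ)⌉₊ with hm₁def
  have hQnn : 0 ≤ g m₁ + s*(N:ℝ)*|lh - ε| := add_nonneg (hgnn m₁) (by positivity)
  refine ⟨g m₁ + s*(N:ℝ)*|lh - ε|, hQnn, ?_⟩
  intro r hr
  rcases hr.eq_or_lt with hr0 | hrpos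
  · rw [← hr0, zero_div, hw0, mul_zero]
    linarith
  set r' : ℝ := r / (Real.exp lh * (1-δ)) with hr'def
  have h1δ : (0:ℝ) < 1 - δ := by linarith
  have hr'pos : 0 < r' := div_pos hrpos (mul_pos (Real.exp_pos _) h1δ)
  have hlogr' : Real.log r' = Real.log r - lh + ε := by
    simp only [hr'def]
    rw [Real.log_div hrpos.ne' (mul_pos (Real.exp_pos _) h1δ).ne',
        Real.log_mul (Real.exp_ne_zero _) h1δ.ne', Real.log_exp]
    simp only [hεdef]
    ring
  have hlogr : Real.log r = Real.log r' + lh - ε := by linarith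
  have key : ∀ k : ℕ, s * Real.log (r^k / M k) ≤ w r' + (g m₁ + s*(N:ℝ)*|lh - ε|) := by
    intro k
    have hlogk : Real.log (r^k / M k) = (k:ℝ) * Real.log r - g k := by
      rw [Real.log_div (pow_ne_zero k hrpos.ne') (hpos k).ne', Real.log_pow]
    have hwr' := hwnn r' hr'pos.le
    rcases lt_or_ge k N with hkN | hkN
    · -- small k
      have hkN' : (k:ℝ) ≤ (N:ℝ) := by exact_mod_cast hkN.le
      have hA : s*(k:ℝ)*Real.log r' ≤ w r' + g m₁ := by
        rcases le_or_gt (Real.log r') 0 with hc | hc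
        · have h1 : s*(k:ℝ)*Real.log r' ≤ 0 :=
            mul_nonpos_of_nonneg_of_nonpos (by positivity) hc
          have h2 := hgnn m₁
          linarith
        · have hsk : s*(k:ℝ) ≤ (m₁:ℝ) := by
            have h1 : s*(k:ℝ) ≤ s*(N:ℝ) := mul_le_mul_of_nonneg_left hkN' hs.le
            have h2 : s*(N:ℝ) ≤ (m₁:ℝ) := Nat.le_ceil _
            linarith
          have h3 : s*(k:ℝ)*Real.log r' ≤ (m₁:ℝ)*Real.log r' :=
            mul_le_mul_of_nonneg_right hsk hc.le
          have h4 : Real.log (r'^m₁ / M m₁) = (m₁:ℝ)*Real.log r' - g m₁ := by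
            rw [Real.log_div (pow_ne_zero m₁ hr'pos.ne') (hpos m₁).ne', Real.log_pow]
          have h5 := hwle r' hr'pos m₁
          rw [h4] at h5
          linarith
      have hB : s*(k:ℝ)*(lh - ε) ≤ s*(N:ℝ)*|lh - ε| := by
        have h1 : s*(k:ℝ)*(lh-ε) ≤ s*(k:ℝ)*|lh-ε| :=
          mul_le_mul_of_nonneg_left (le_abs_self _) (by positivity)
        have h2 : s*(k:ℝ)*|lh-ε| ≤ s*(N:ℝ)*|lh-ε| :=
          mul_le_mul_of_nonneg_right (mul_le_mul_of_nonneg_left hkN' hs.le) (abs_nonneg _)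
        linarith
      rw [hlogk, hlogr]
      nlinarith [mul_nonneg hs.le (hgnn k)]
    · -- large k
      have hk1 : 1 ≤ k := le_trans (le_max_right N₀ 1) hkN
      have hkN₀ : N₀ ≤ k := le_trans (le_max_left N₀ 1) hkN
      have hk0 : (0:ℝ) < (k:ℝ) := by exact_mod_cast hk1
      have hsk : (0:ℝ) < s*(k:ℝ) := mul_pos hs hk0
      have hlogeq : Real.log ((M k)^s / M (⌊s*(k:ℝ)⌋₊ + 1))
          = s * g k - g (⌊s*(k:ℝ)⌋₊ + 1) := by
        rw [Real.log_div (Real.rpow_pos_of_pos (hpos k) s).ne' (hpos _).ne',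
            Real.log_rpow (hpos k)]
      have h5 := hN₀ k hkN₀
      rw [hlogeq] at h5
      have hX : (lh - ε) * (s*(k:ℝ)) ≤ s * g k - g (⌊s*(k:ℝ)⌋₊ + 1) := by
        rw [one_div, inv_mul_eq_div] at h5
        exact ((lt_div_iff₀ hsk).1 h5).le
      rw [hlogk, hlogr]
      have hgj' := hgnn (⌊s*(k:ℝ)⌋₊ + 1)
      rcases le_or_gt (Real.log r') 0 with hc | hc
      · have hterm : s*(k:ℝ)*Real.log r' ≤ 0 :=
          mul_nonpos_of_nonneg_of_nonpos (by positivity) hc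
        nlinarith
      · have hskj : s*(k:ℝ) ≤ ((⌊s*(k:ℝ)⌋₊ + 1 : ℕ):ℝ) := by
          have := Nat.lt_floor_add_one (s*(k:ℝ))
          push_cast
          linarith
        have hterm2 : s*(k:ℝ)*Real.log r' ≤ ((⌊s*(k:ℝ)⌋₊ + 1 : ℕ):ℝ)*Real.log r' :=
          mul_le_mul_of_nonneg_right hskj hc.le
        have h4 : Real.log (r'^(⌊s*(k:ℝ)⌋₊ + 1) / M (⌊s*(k:ℝ)⌋₊ + 1))
            = ((⌊s*(k:ℝ)⌋₊ + 1 : ℕ):ℝ)*Real.log r' - g (⌊s*(k:ℝ)⌋₊ + 1) := by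
          rw [Real.log_div (pow_ne_zero _ hr'pos.ne') (hpos _).ne', Real.log_pow]
        have h5' := hwle r' hr'pos (⌊s*(k:ℝ)⌋₊ + 1)
        rw [h4] at h5'
        nlinarith
  rw [hw r hrpos]
  have hsup : (⨆ k : ℕ, Real.log (r^k / M k))
      ≤ (w r' + (g m₁ + s*(N:ℝ)*|lh - ε|))/s := by
    refine ciSup_le (fun k => ?_)
    rw [le_div_iff₀ hs]
    linarith [key k]
  calc s * (⨆ k : ℕ, Real.log (r^k / M k))
      ≤ s * ((w r' + (g m₁ + s*(N:ℝ)*|lh - ε|))/s) :=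
        mul_le_mul_of_nonneg_left hsup hs.le
    _ = w r' + (g m₁ + s*(N:ℝ)*|lh - ε|) := by field_simp
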